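/- Assume π is a positive continuous probability density on ℝ, q : ℝ² → [0,∞) is bounded continuous with ∫_ℝ q(x,y)dy = 1 for every x and satisfies the finite range assumption (|u| > s implies q(x,x+u) = 0), and moreover for every x ∈ ℝ there exists y ∈ [x−s, x+s] with q(x,y)·q(y,x) ≠ 0. Then the rejection probability function r(·) is continuous on ℝ and, for every a > 0, r_a := sup_{|x|≤a} r(x) < 1. -/

import Mathlib

open MeasureTheory Filter Topology

noncomputable section

/-- The probability measure on `ℝ` with density `π` w.r.t. Lebesgue measure. -/
def piMeas (π : ℝ → ℝ) : Measure ℝ := volume.withDensity fun x => ENNReal.ofReal (π x)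

/-- `t(x,y) = min(q(x,y), π(y) q(y,x) / π(x))`. -/
def mhT (π : ℝ → ℝ) (q : ℝ → ℝ → ℝ) (x y : ℝ) : ℝ := min (q x y) (π y * q y x / π x)

/-- The rejection probability `r(x) = 1 - ∫ t(x,y) dy`. -/
def mhR (π : ℝ → ℝ) (q : ℝ → ℝ → ℝ) (x : ℝ) : ℝ := 1 - ∫ y, mhT π q x y

section aux

variable (π : ℝ → ℝ) (q : ℝ → ℝ → ℝ)

lemma mhT_nonneg (hπpos : ∀ x, 0 < π x) (hqnn : ∀ x y, 0 ≤ q x y) (x y : ℝ) :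
    0 ≤ mhT π q x y := by
  have h1 := hqnn x y
  have h2 : 0 ≤ π y * q y x / π x :=
    div_nonneg (mul_nonneg (hπpos y).le (hqnn y x)) (hπpos x).le
  exact le_min h1 h2

lemma mhT_zero {s : ℝ} (hrange : ∀ x u : ℝ, s < |u| → q x (x + u) = 0)
    {x y : ℝ} (h : s < |y - x|) : mhT π q x y = 0 := by
  have h1 : q x y = 0 := by
    have := hrange x (y - x) h
    simpa using this
  have h2 : q y x = 0 := by
    have hx : s < |x - y| := by rwa [abs_sub_comm]
    have := hrange y (x - y) hx
    simpa using this
  simp [mhT, h1, h2]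

lemma mhT_cont (hπpos : ∀ x, 0 < π x) (hπcont : Continuous π)
    (hqcont : Continuous fun p : ℝ × ℝ => q p.1 p.2) :
    Continuous fun p : ℝ × ℝ => mhT π q p.1 p.2 := by
  apply Continuous.min hqcont
  apply Continuous.div
  · exact (hπcont.comp continuous_snd).mul
      (hqcont.comp (continuous_snd.prodMk continuous_fst))
  · exact hπcont.comp continuous_fst
  · exact fun p => (hπpos p.1).ne'

lemma mhT_integrable (hπpos : ∀ x, 0 < π x) (hπcont : Continuous π)
    (hqcont : Continuous fun p : ℝ × ℝ => q p.1 p.2)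
    {s : ℝ} (hrange : ∀ x u : ℝ, s < |u| → q x (x + u) = 0) (x : ℝ) :
    Integrable (mhT π q x) := by
  have hcont : Continuous (mhT π q x) :=
    (mhT_cont π q hπpos hπcont hqcont).comp (Continuous.prodMk_right x)
  refine hcont.integrable_of_hasCompactSupport ?_
  apply HasCompactSupport.intro (isCompact_Icc (a := x - s) (b := x + s))
  intro y hy
  apply mhT_zero π q hrange
  rw [Set.mem_Icc, not_and_or, not_le, not_le] at hy
  rcases hy with hy | hy
  · have h := le_abs_self (x - y); rw [abs_sub_comm] at h; linarith
  · have h := le_abs_self (y - x); linarith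

lemma integral_mhT_pos (hπpos : ∀ x, 0 < π x) (hπcont : Continuous π)
    (hqnn : ∀ x y, 0 ≤ q x y)
    (hqcont : Continuous fun p : ℝ × ℝ => q p.1 p.2)
    {s : ℝ} (hrange : ∀ x u : ℝ, s < |u| → q x (x + u) = 0)
    (hqq : ∀ x : ℝ, ∃ y ∈ Set.Icc (x - s) (x + s), q x y * q y x ≠ 0)
    (x : ℝ) : 0 < ∫ y, mhT π q x y := by
  have hint := mhT_integrable π q hπpos hπcont hqcont hrange x
  rw [integral_pos_iff_support_of_nonneg (mhT_nonneg π q hπpos hqnn x) hint]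
  obtain ⟨y₀, -, hy₀⟩ := hqq x
  have hq1 : 0 < q x y₀ := (hqnn x y₀).lt_of_ne' (fun h => hy₀ (by simp [h]))
  have hq2 : 0 < q y₀ x := (hqnn y₀ x).lt_of_ne' (fun h => hy₀ (by simp [h]))
  have hpos : 0 < mhT π q x y₀ := by
    apply lt_min hq1
    exact div_pos (mul_pos (hπpos y₀) hq2) (hπpos x)
  have hcont : Continuous (mhT π q x) :=
    (mhT_cont π q hπpos hπcont hqcont).comp (Continuous.prodMk_right x)
  have hopen : IsOpen {y | 0 < mhT π q x y} := isOpen_lt continuous_const hcont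
  have hsub : {y | 0 < mhT π q x y} ⊆ Function.support (mhT π q x) :=
    fun y hy => ne_of_gt hy
  calc (0 : ENNReal) < volume {y | 0 < mhT π q x y} := hopen.measure_pos volume ⟨y₀, hpos⟩
    _ ≤ volume (Function.support (mhT π q x)) := measure_mono hsub

lemma mhR_cont (hπpos : ∀ x, 0 < π x) (hπcont : Continuous π)
    (hqnn : ∀ x y, 0 ≤ q x y) (hqbdd : ∃ M, ∀ x y, q x y ≤ M)
    (hqcont : Continuous fun p : ℝ × ℝ => q p.1 p.2)
    {s : ℝ} (hrange : ∀ x u : ℝ, s < |u| → q x (x + u) = 0) :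
    Continuous (mhR π q) := by
  obtain ⟨M, hM⟩ := hqbdd
  have hM0 : 0 ≤ M := le_trans (hqnn 0 0) (hM 0 0)
  have key : Continuous fun x => ∫ y, mhT π q x y := by
    rw [continuous_iff_continuousAt]
    intro x₀
    apply continuousAt_of_dominated (bound :=
      (Set.Icc (x₀ - (s + 1)) (x₀ + (s + 1))).indicator fun _ => M)
    · filter_upwards with x
      exact ((mhT_cont π q hπpos hπcont hqcont).comp
        (Continuous.prodMk_right x)).aestronglyMeasurable
    · have hball : Metric.ball x₀ 1 ∈ 𝓝 x₀ := Metric.ball_mem_nhds x₀ one_pos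
      filter_upwards [hball] with x hx
      filter_upwards with y
      have hxd : |x - x₀| < 1 := by
        rw [Metric.mem_ball, Real.dist_eq] at hx; exact hx
      by_cases hy : y ∈ Set.Icc (x₀ - (s + 1)) (x₀ + (s + 1))
      · rw [Set.indicator_of_mem hy]
        rw [Real.norm_eq_abs, abs_of_nonneg (mhT_nonneg π q hπpos hqnn x y)]
        exact le_trans (min_le_left _ _) (hM x y)
      · rw [Set.indicator_of_notMem hy]
        have hfar : s < |y - x| := by
          rw [Set.mem_Icc, not_and_or, not_le, not_le] at hy
          have h1 : s + 1 < |y - x₀| := by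
            rcases hy with hy | hy
            · have h := le_abs_self (x₀ - y); rw [abs_sub_comm] at h; linarith
            · have h := le_abs_self (y - x₀); linarith
          have h2 : |y - x₀| ≤ |y - x| + |x - x₀| := by
            calc |y - x₀| = |(y - x) + (x - x₀)| := by ring_nf
              _ ≤ |y - x| + |x - x₀| := abs_add_le _ _
          linarith
        rw [mhT_zero π q hrange hfar]
        simp
    · rw [integrable_indicator_iff measurableSet_Icc]
      exact integrableOn_const measure_Icc_lt_top.ne
    · filter_upwards with y
      exact ((mhT_cont π q hπpos hπcont hqcont).comp
        (continuous_id.prodMk continuous_const)).continuousAt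
  exact continuous_const.sub key

end aux

theorem r_continuous_and_ra_lt_one
    (π : ℝ → ℝ) (hπpos : ∀ x, 0 < π x) (hπcont : Continuous π)
    (hπprob : ∫ x, π x = 1)
    (q : ℝ → ℝ → ℝ) (hqnn : ∀ x y, 0 ≤ q x y) (hqbdd : ∃ M, ∀ x y, q x y ≤ M)
    (hqcont : Continuous fun p : ℝ × ℝ => q p.1 p.2) (hqprob : ∀ x, ∫ y, q x y = 1)
    (s : ℝ) (hs : 0 < s) (hrange : ∀ x u : ℝ, s < |u| → q x (x + u) = 0)
    (hqq : ∀ x : ℝ, ∃ y ∈ Set.Icc (x - s) (x + s), q x y * q y x ≠ 0) :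
    Continuous (mhR π q) ∧
      ∀ a : ℝ, 0 < a → sSup (mhR π q '' {x | |x| ≤ a}) < 1 := by
  have hcont : Continuous (mhR π q) := mhR_cont π q hπpos hπcont hqnn hqbdd hqcont hrange
  refine ⟨hcont, ?_⟩
  intro a ha
  have hset : {x : ℝ | |x| ≤ a} = Set.Icc (-a) a := by
    ext x; simp [abs_le]
  have hK : IsCompact (mhR π q '' {x | |x| ≤ a}) := by
    rw [hset]
    exact (isCompact_Icc.image hcont)
  have hne : (mhR π q '' {x | |x| ≤ a}).Nonempty :=
    ⟨mhR π q 0, Set.mem_image_of_mem _ (by simp [ha.le])⟩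
  obtain ⟨x₀, -, hx₀⟩ := hK.sSup_mem hne
  rw [← hx₀]
  have := integral_mhT_pos π q hπpos hπcont hqnn hqcont hrange hqq x₀
  unfold mhR
  linarith
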